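/- Let G₁ and G₂ be finite connected simple graphs with k₁ and k₂ peripheral vertices respectively. Then PW(G₁ □ G₂) = k₂²·PW(G₁) + k₁²·PW(G₂). -/

import Mathlib

open Finset SimpleGraph

noncomputable section

/-- Eccentricity of a vertex: maximum distance to any vertex. -/
def ecc {V : Type*} [Fintype V] (G : SimpleGraph V) (u : V) : ℕ :=
  Finset.univ.sup (G.dist u)

/-- Diameter: maximum eccentricity. -/
def gdiam {V : Type*} [Fintype V] (G : SimpleGraph V) : ℕ :=
  Finset.univ.sup (ecc G)

/-- The set of peripheral vertices: vertices of maximum eccentricity. -/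
def peri {V : Type*} [Fintype V] [DecidableEq V] (G : SimpleGraph V) : Finset V :=
  Finset.univ.filter (fun u => ecc G u = gdiam G)

/-- Wiener index: sum of distances over unordered pairs of distinct vertices. -/
def wiener {V : Type*} [Fintype V] [DecidableEq V] (G : SimpleGraph V) : ℚ :=
  (1/2) * ∑ p ∈ (Finset.univ : Finset V).offDiag, (G.dist p.1 p.2 : ℚ)

/-- Hyper-Wiener index. -/
def hyperWiener {V : Type*} [Fintype V] [DecidableEq V] (G : SimpleGraph V) : ℚ :=
  (1/4) * ∑ p ∈ (Finset.univ : Finset V).offDiag,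
    ((G.dist p.1 p.2 : ℚ) + (G.dist p.1 p.2 : ℚ) ^ 2)

/-- Peripheral Wiener index. -/
def periWiener {V : Type*} [Fintype V] [DecidableEq V] (G : SimpleGraph V) : ℚ :=
  (1/2) * ∑ p ∈ (peri G).offDiag, (G.dist p.1 p.2 : ℚ)

/-- Peripheral hyper-Wiener index. -/
def periHyperWiener {V : Type*} [Fintype V] [DecidableEq V] (G : SimpleGraph V) : ℚ :=
  (1/4) * ∑ p ∈ (peri G).offDiag,
    ((G.dist p.1 p.2 : ℚ) + (G.dist p.1 p.2 : ℚ) ^ 2)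

end

section Aux

variable {α β : Type*} {G : SimpleGraph α} {H : SimpleGraph β}

lemma dist_add_dist_le_walk_length (hG : G.Connected) (hH : H.Connected)
    {x y : α × β} (w : (G.boxProd H).Walk x y) :
    G.dist x.1 y.1 + H.dist x.2 y.2 ≤ w.length := by
  induction w with
  | nil => simp
  | @cons x z y h w ih =>
    rcases h with ⟨hA, he⟩ | ⟨hA, he⟩
    · have h1 : G.dist x.1 y.1 ≤ G.dist x.1 z.1 + G.dist z.1 y.1 := hG.dist_triangle
      have h2 : G.dist x.1 z.1 = 1 := (SimpleGraph.dist_eq_one_iff_adj).2 hA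
      have h3 : H.dist x.2 y.2 = H.dist z.2 y.2 := by rw [he]
      show _ ≤ w.length + 1
      omega
    · have h1 : H.dist x.2 y.2 ≤ H.dist x.2 z.2 + H.dist z.2 y.2 := hH.dist_triangle
      have h2 : H.dist x.2 z.2 = 1 := (SimpleGraph.dist_eq_one_iff_adj).2 hA
      have h3 : G.dist x.1 y.1 = G.dist z.1 y.1 := by rw [he]
      show _ ≤ w.length + 1
      omega

lemma boxProd_dist (hG : G.Connected) (hH : H.Connected) (x y : α × β) :
    (G.boxProd H).dist x y = G.dist x.1 y.1 + H.dist x.2 y.2 := by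
  refine le_antisymm ?_ ?_
  · obtain ⟨w₁, h₁⟩ := hG.exists_walk_length_eq_dist x.1 y.1
    obtain ⟨w₂, h₂⟩ := hH.exists_walk_length_eq_dist x.2 y.2
    obtain ⟨a, b⟩ := x
    obtain ⟨c, d⟩ := y
    have := SimpleGraph.dist_le ((w₁.boxProdLeft H b).append (w₂.boxProdRight G c))
    have e1 : (w₁.boxProdLeft H b).length = w₁.length := SimpleGraph.Walk.length_map _ _
    have e2 : (w₂.boxProdRight G c).length = w₂.length := SimpleGraph.Walk.length_map _ _
    rw [SimpleGraph.Walk.length_append, e1, e2, h₁, h₂] at this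
    exact this
  · obtain ⟨w, hw⟩ := (hG.boxProd hH).exists_walk_length_eq_dist x y
    rw [← hw]
    exact dist_add_dist_le_walk_length hG hH w

variable [Fintype α] [Fintype β]

lemma ecc_boxProd (hG : G.Connected) (hH : H.Connected) (x : α × β) :
    ecc (G.boxProd H) x = ecc G x.1 + ecc H x.2 := by
  have hne1 : Nonempty α := hG.nonempty
  have hne2 : Nonempty β := hH.nonempty
  refine le_antisymm (Finset.sup_le fun y _ => ?_) ?_
  · rw [boxProd_dist hG hH]
    exact Nat.add_le_add (Finset.le_sup (Finset.mem_univ y.1))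
      (Finset.le_sup (Finset.mem_univ y.2))
  · obtain ⟨c, -, hc⟩ := Finset.exists_mem_eq_sup Finset.univ Finset.univ_nonempty (G.dist x.1)
    obtain ⟨d, -, hd⟩ := Finset.exists_mem_eq_sup Finset.univ Finset.univ_nonempty (H.dist x.2)
    have : (G.boxProd H).dist x (c, d) = ecc G x.1 + ecc H x.2 := by
      rw [boxProd_dist hG hH]; rw [ecc, ecc, hc, hd]
    calc ecc G x.1 + ecc H x.2 = (G.boxProd H).dist x (c, d) := this.symm
      _ ≤ _ := Finset.le_sup (Finset.mem_univ (c, d))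

lemma gdiam_boxProd (hG : G.Connected) (hH : H.Connected) :
    gdiam (G.boxProd H) = gdiam G + gdiam H := by
  have hne1 : Nonempty α := hG.nonempty
  have hne2 : Nonempty β := hH.nonempty
  refine le_antisymm (Finset.sup_le fun x _ => ?_) ?_
  · rw [ecc_boxProd hG hH]
    exact Nat.add_le_add (Finset.le_sup (Finset.mem_univ x.1))
      (Finset.le_sup (Finset.mem_univ x.2))
  · obtain ⟨c, -, hc⟩ := Finset.exists_mem_eq_sup Finset.univ Finset.univ_nonempty (ecc G)
    obtain ⟨d, -, hd⟩ := Finset.exists_mem_eq_sup Finset.univ Finset.univ_nonempty (ecc H)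
    calc gdiam G + gdiam H = ecc (G.boxProd H) (c, d) := by
          rw [ecc_boxProd hG hH, gdiam, gdiam, hc, hd]
      _ ≤ _ := Finset.le_sup (Finset.mem_univ (c, d))

lemma peri_boxProd [DecidableEq α] [DecidableEq β] (hG : G.Connected) (hH : H.Connected) :
    peri (G.boxProd H) = (peri G) ×ˢ (peri H) := by
  ext ⟨a, b⟩
  simp only [peri, Finset.mem_filter, Finset.mem_univ, true_and, Finset.mem_product,
    ecc_boxProd hG hH, gdiam_boxProd hG hH]
  have h1 : ecc G a ≤ gdiam G := Finset.le_sup (Finset.mem_univ a)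
  have h2 : ecc H b ≤ gdiam H := Finset.le_sup (Finset.mem_univ b)
  omega

lemma sum_sum_add {γ δ : Type*} (s : Finset γ) (t : Finset δ) (f : γ → ℚ) (g : δ → ℚ) :
    ∑ a ∈ s, ∑ b ∈ t, (f a + g b) = (t.card : ℚ) * ∑ a ∈ s, f a + (s.card : ℚ) * ∑ b ∈ t, g b := by
  simp only [Finset.sum_add_distrib, Finset.sum_const, nsmul_eq_mul, Finset.mul_sum]

lemma sum_offDiag_eq_sum_sq {γ : Type*} [DecidableEq γ] (s : Finset γ) (f : γ → γ → ℚ)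
    (hf : ∀ a, f a a = 0) :
    ∑ p ∈ s.offDiag, f p.1 p.2 = ∑ a ∈ s, ∑ b ∈ s, f a b := by
  rw [← Finset.sum_product']
  rw [← Finset.diag_union_offDiag (s := s),
    Finset.sum_union (Finset.disjoint_diag_offDiag s)]
  have : ∑ p ∈ s.diag, f p.1 p.2 = 0 := by
    refine Finset.sum_eq_zero fun p hp => ?_
    obtain ⟨-, h⟩ := Finset.mem_diag.1 hp
    rw [← h, hf]
  rw [this, zero_add]

end Aux

theorem pw_boxProd {V W : Type*} [Fintype V] [Fintype W] [DecidableEq V] [DecidableEq W]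
    (G : SimpleGraph V) (H : SimpleGraph W) (hG : G.Connected) (hH : H.Connected)
    (k₁ k₂ : ℕ) (hk₁ : k₁ = (peri G).card) (hk₂ : k₂ = (peri H).card) :
    periWiener (G.boxProd H) =
      (k₂ : ℚ) ^ 2 * periWiener G + (k₁ : ℚ) ^ 2 * periWiener H := by
  classical
  set A := peri G
  set B := peri H
  have key : ∑ p ∈ (A ×ˢ B).offDiag, ((G.boxProd H).dist p.1 p.2 : ℚ)
      = (k₂ : ℚ) ^ 2 * ∑ p ∈ A.offDiag, (G.dist p.1 p.2 : ℚ)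
      + (k₁ : ℚ) ^ 2 * ∑ p ∈ B.offDiag, (H.dist p.1 p.2 : ℚ) := by
    rw [sum_offDiag_eq_sum_sq (A ×ˢ B) (fun x y => ((G.boxProd H).dist x y : ℚ)) (fun a => by simp)]
    have hdist : ∀ x y : V × W, ((G.boxProd H).dist x y : ℚ)
        = (G.dist x.1 y.1 : ℚ) + (H.dist x.2 y.2 : ℚ) := by
      intro x y; rw [boxProd_dist hG hH]; push_cast; ring
    simp only [hdist]
    rw [Finset.sum_product]
    simp only [Finset.sum_product (s := A) (t := B)]
    simp only [sum_sum_add]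
    have eA : ∑ a ∈ A, ((B.card : ℚ) * ∑ c ∈ A, (G.dist a c : ℚ))
        = (B.card : ℚ) * ∑ a ∈ A, ∑ c ∈ A, (G.dist a c : ℚ) := by
      rw [Finset.mul_sum]
    have eB : ∑ b ∈ B, ((A.card : ℚ) * ∑ d ∈ B, (H.dist b d : ℚ))
        = (A.card : ℚ) * ∑ b ∈ B, ∑ d ∈ B, (H.dist b d : ℚ) := by
      rw [Finset.mul_sum]
    rw [eA, eB,
      ← sum_offDiag_eq_sum_sq A (fun a c => (G.dist a c : ℚ)) (fun a => by simp),
      ← sum_offDiag_eq_sum_sq B (fun b d => (H.dist b d : ℚ)) (fun b => by simp),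
      hk₁, hk₂]
    ring
  rw [periWiener, peri_boxProd hG hH, key, periWiener, periWiener]
  ring
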